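/- Let a = ⟨λ₁,…,λ_k⟩ be as above with Λ = Σ_{i=1}^k λ_i. Define Λ_j = Σ_{i=1}^j λ_i (with Λ_0 = 0) and, for 0 ≤ ℓ < Λ, let μ_ℓ be the minimum index j with Λ_j > ℓ. Call a finite sequence of digits d_M, d_{M-1}, …, d_0 a-valid if every digit satisfies 0 ≤ d_i < Λ, d_M ≠ 0, and whenever d_i = ℓ with i < M, the digits d_{i+1}, …, d_{i+μ_ℓ-1} are all 0. Then for every integer t ≥ 1, the number of a-valid sequences with at most t digits equals a_t − 1. -/

import Mathlib

/-- `Λ_j = λ₁ + ⋯ + λ_j`. -/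
def Lam (lam : ℕ → ℕ) (j : ℕ) : ℕ := ∑ i ∈ Finset.Icc 1 j, lam i

/-- `μ_ℓ` is the minimum index `j` with `Λ_j > ℓ`. -/
noncomputable def mu (lam : ℕ → ℕ) (ℓ : ℕ) : ℕ := sInf {j : ℕ | ℓ < Lam lam j}

/-- An `a`-valid digit sequence, recorded as a list `[d_0, d_1, …, d_M]`
(least significant digit first): all digits are `< Λ`, the leading digit
`d_M` is nonzero, and every digit `ℓ` at position `i < M` is preceded
(at positions `i+1, …, i+μ_ℓ-1`) by zeroes. -/
def AValid (lam : ℕ → ℕ) (k : ℕ) (l : List ℕ) : Prop :=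
  l ≠ [] ∧ (∀ x ∈ l, x < Lam lam k) ∧ l.getLast? ≠ some 0 ∧
  ∀ i j : ℕ, i < j → j < i + mu lam (l.getD i 0) → j < l.length → l.getD j 0 = 0

section
variable (lam : ℕ → ℕ) (k : ℕ)

lemma Lam_mono : Monotone (Lam lam) := fun _ _ h =>
  Finset.sum_le_sum_of_subset (Finset.Icc_subset_Icc_right h)

lemma Lam_zero : Lam lam 0 = 0 := by simp [Lam]

lemma Lam_succ (j : ℕ) : Lam lam (j + 1) = Lam lam j + lam (j + 1) := by
  simpa [Lam] using Finset.sum_Icc_succ_top (by omega : 1 ≤ j + 1) lam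

variable {lam k}

lemma mu_spec {ℓ : ℕ} (hℓ : ℓ < Lam lam k) : ℓ < Lam lam (mu lam ℓ) :=
  Nat.sInf_mem (⟨k, hℓ⟩ : Set.Nonempty {j : ℕ | ℓ < Lam lam j})

lemma mu_le {ℓ : ℕ} (hℓ : ℓ < Lam lam k) : mu lam ℓ ≤ k :=
  Nat.sInf_le (show k ∈ {j : ℕ | ℓ < Lam lam j} from hℓ)

lemma mu_lb {ℓ j : ℕ} (hj : j < mu lam ℓ) : Lam lam j ≤ ℓ := by
  by_contra h
  push_neg at h
  have h2 : mu lam ℓ ≤ j := Nat.sInf_le (show j ∈ {j : ℕ | ℓ < Lam lam j} from h)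
  omega

lemma mu_pos {ℓ : ℕ} (hℓ : ℓ < Lam lam k) : 0 < mu lam ℓ := by
  rcases Nat.eq_zero_or_pos (mu lam ℓ) with h | h
  · have h2 := mu_spec hℓ
    rw [h, Lam_zero] at h2; omega
  · exact h

lemma mu_zero (h1 : 1 ≤ lam 1) : mu lam 0 = 1 := by
  have h1' : (1 : ℕ) ∈ {j : ℕ | 0 < Lam lam j} := by
    simp [Lam]; omega
  have hle : mu lam 0 ≤ 1 := Nat.sInf_le h1'
  rcases Nat.eq_zero_or_pos (mu lam 0) with h | h
  · have h2 : (0:ℕ) < Lam lam (mu lam 0) :=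
      Nat.sInf_mem (⟨1, h1'⟩ : Set.Nonempty {j : ℕ | 0 < Lam lam j})
    rw [h, Lam_zero] at h2; omega
  · omega

lemma mu_eq {ℓ j : ℕ} (hj : 1 ≤ j) (h1 : Lam lam (j - 1) ≤ ℓ) (h2 : ℓ < Lam lam j) :
    mu lam ℓ = j := by
  have h2' : j ∈ {j : ℕ | ℓ < Lam lam j} := h2
  have hle : mu lam ℓ ≤ j := Nat.sInf_le h2'
  rcases Nat.lt_or_ge (mu lam ℓ) j with h | h
  · have hmono : Lam lam (mu lam ℓ) ≤ Lam lam (j - 1) := Lam_mono lam (by omega)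
    have hm : ℓ < Lam lam (mu lam ℓ) :=
      Nat.sInf_mem (⟨j, h2'⟩ : Set.Nonempty {j : ℕ | ℓ < Lam lam j})
    omega
  · omega

end

/-- valid string (trailing zeros allowed) -/
def Pstr (lam : ℕ → ℕ) (k : ℕ) (l : List ℕ) : Prop :=
  (∀ x ∈ l, x < Lam lam k) ∧
  ∀ i j : ℕ, i < j → j < i + mu lam (l.getD i 0) → j < l.length → l.getD j 0 = 0

def Tset (lam : ℕ → ℕ) (k t : ℕ) : Set (List ℕ) :=
  {l : List ℕ | Pstr lam k l ∧ l.length = t}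

lemma getD_zero_drop (l : List ℕ) (n i : ℕ) :
    (l.drop n).getD i 0 = l.getD (n + i) 0 := by
  rcases Nat.lt_or_ge (n + i) l.length with h | h
  · rw [List.getD_eq_getElem _ _ (by simpa [List.length_drop] using by omega),
      List.getD_eq_getElem _ _ h]
    simp [List.getElem_drop]
  · rw [List.getD_eq_default _ _ (by simp [List.length_drop]; omega),
      List.getD_eq_default _ _ h]

lemma getD_zero_cons (x : ℕ) (l : List ℕ) (i : ℕ) :
    (x :: l).getD (i + 1) 0 = l.getD i 0 := by
  simp [List.getD]

lemma getD_zero_append_left (l l' : List ℕ) (i : ℕ) (h : i < l.length) :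
    (l ++ l').getD i 0 = l.getD i 0 := List.getD_append _ _ _ _ h

lemma getD_zero_append_right (l l' : List ℕ) (i : ℕ) (h : l.length ≤ i) :
    (l ++ l').getD i 0 = l'.getD (i - l.length) 0 := by
  rcases Nat.lt_or_ge i (l.length + l'.length) with h2 | h2
  · rw [List.getD_eq_getElem _ _ (by simp; omega),
      List.getD_eq_getElem _ _ (by omega)]
    rw [List.getElem_append_right h]
  · rw [List.getD_eq_default _ _ (by simp; omega), List.getD_eq_default _ _ (by omega)]

lemma getD_zero_replicate (m i : ℕ) :
    (List.replicate m (0:ℕ)).getD i 0 = 0 := by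
  rcases Nat.lt_or_ge i m with h | h
  · rw [List.getD_eq_getElem _ _ (by simpa using h)]; simp
  · rw [List.getD_eq_default _ _ (by simpa using h)]

lemma getD_zero_take (l : List ℕ) (n i : ℕ) (h : i < n) :
    (l.take n).getD i 0 = l.getD i 0 := by
  rcases Nat.lt_or_ge i l.length with h2 | h2
  · rw [List.getD_eq_getElem _ _ (by simp; omega), List.getD_eq_getElem _ _ h2]
    simp [List.getElem_take]
  · rw [List.getD_eq_default _ _ (by simp; omega), List.getD_eq_default _ _ h2]

/-- finiteness -/
lemma Tset_finite (lam : ℕ → ℕ) (k t : ℕ) : (Tset lam k t).Finite := by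
  have hbox : ∀ t : ℕ, ({l : List ℕ | l.length = t ∧ ∀ x ∈ l, x < Lam lam k}).Finite := by
    intro t
    induction t with
    | zero =>
      apply Set.Finite.subset (Set.finite_singleton ([] : List ℕ))
      rintro l ⟨h1, -⟩
      simp [List.length_eq_zero_iff.mp h1]
    | succ n ih =>
      apply Set.Finite.subset (((Set.finite_Iio (Lam lam k)).prod ih).image
        (fun p : ℕ × List ℕ => p.1 :: p.2))
      rintro l ⟨h1, h2⟩
      rcases l with - | ⟨x, l⟩
      · simp at h1
      · exact ⟨(x, l), ⟨h2 x (by simp), by simp at h1; exact ⟨h1, fun y hy => h2 y (by simp [hy])⟩⟩, rfl⟩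
  exact Set.Finite.subset (hbox t) (fun l hl => ⟨hl.2, hl.1.1⟩)

lemma eq_of_getD {l₁ l₂ : List ℕ} (hlen : l₁.length = l₂.length)
    (h : ∀ i, l₁.getD i 0 = l₂.getD i 0) : l₁ = l₂ :=
  List.ext_getElem hlen (fun i h1 h2 => by
    rw [← List.getD_eq_getElem l₁ 0 h1, ← List.getD_eq_getElem l₂ 0 h2]; exact h i)

/-- the cons-decomposition map -/
noncomputable def gmap (lam : ℕ → ℕ) (t ℓ : ℕ) (l' : List ℕ) : List ℕ :=
  ℓ :: (List.replicate (min (mu lam ℓ - 1) (t - 1)) 0 ++ l')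

lemma Tset_decomp {lam : ℕ → ℕ} {k : ℕ} (h1 : 1 ≤ lam 1) (hΛ : 2 ≤ Lam lam k)
    {t : ℕ} (ht : 1 ≤ t) :
    Tset lam k t =
      ⋃ ℓ ∈ Finset.range (Lam lam k), gmap lam t ℓ '' Tset lam k (t - mu lam ℓ) := by
  ext l
  simp only [Set.mem_iUnion, Set.mem_image, Finset.mem_range, exists_prop]
  constructor
  · rintro ⟨⟨hdig, hcon⟩, hlen⟩
    have hlpos : 0 < l.length := by omega
    have hdmem : l.getD 0 0 ∈ l := by
      rw [List.getD_eq_getElem _ _ hlpos]; exact List.getElem_mem _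
    have hd : l.getD 0 0 < Lam lam k := hdig _ hdmem
    have hμpos : 0 < mu lam (l.getD 0 0) := mu_pos hd
    have claimA : ∀ j, 1 ≤ j → j ≤ min (mu lam (l.getD 0 0) - 1) (t - 1) →
        l.getD j 0 = 0 := by
      intro j hj1 hj2
      exact hcon 0 j (by omega) (by omega) (by omega)
    refine ⟨l.getD 0 0, hd,
      l.drop (1 + min (mu lam (l.getD 0 0) - 1) (t - 1)),
      ⟨⟨fun x hx => hdig x (List.drop_subset _ _ hx), ?_⟩, ?_⟩, ?_⟩
    · intro i' j' hij hj hjlen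
      rw [List.length_drop] at hjlen
      rw [getD_zero_drop] at hj ⊢
      exact hcon (1 + min (mu lam (l.getD 0 0) - 1) (t - 1) + i')
        (1 + min (mu lam (l.getD 0 0) - 1) (t - 1) + j')
        (by omega) (by omega) (by omega)
    · rw [List.length_drop]; omega
    · symm
      apply eq_of_getD
      · simp [gmap, List.length_drop]; omega
      · intro i
        rcases Nat.eq_zero_or_pos i with rfl | hipos
        · simp [gmap, List.getD]
        rcases Nat.lt_or_ge i (1 + min (mu lam (l.getD 0 0) - 1) (t - 1)) with hi | hi
        · have hz : (gmap lam t (l.getD 0 0)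
              (l.drop (1 + min (mu lam (l.getD 0 0) - 1) (t - 1)))).getD i 0 = 0 := by
            obtain ⟨p, rfl⟩ : ∃ p, i = p + 1 := ⟨i - 1, by omega⟩
            rw [gmap, getD_zero_cons, getD_zero_append_left _ _ _ (by rw [List.length_replicate]; omega),
              getD_zero_replicate]
          rw [claimA i hipos (by omega), hz]
        · obtain ⟨p, rfl⟩ : ∃ p, i = p + 1 := ⟨i - 1, by omega⟩
          rw [gmap, getD_zero_cons, getD_zero_append_right _ _ _ (by rw [List.length_replicate]; omega),
            getD_zero_drop]
          simp only [List.length_replicate]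
          congr 1
          omega
  · rintro ⟨ℓ, hℓ, l', ⟨⟨hdig', hcon'⟩, hlen'⟩, rfl⟩
    have hμpos : 0 < mu lam ℓ := mu_pos hℓ
    have hLen : (gmap lam t ℓ l').length = t := by
      simp [gmap]; omega
    have g0 : (gmap lam t ℓ l').getD 0 0 = ℓ := by simp [gmap, List.getD]
    have gmid : ∀ p, 1 ≤ p → p ≤ min (mu lam ℓ - 1) (t - 1) →
        (gmap lam t ℓ l').getD p 0 = 0 := by
      intro p hp1 hp2
      obtain ⟨q, rfl⟩ : ∃ q, p = q + 1 := ⟨p - 1, by omega⟩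
      rw [gmap, getD_zero_cons, getD_zero_append_left _ _ _ (by rw [List.length_replicate]; omega),
        getD_zero_replicate]
    have ghigh : ∀ p, 1 + min (mu lam ℓ - 1) (t - 1) ≤ p →
        (gmap lam t ℓ l').getD p 0 =
          l'.getD (p - 1 - min (mu lam ℓ - 1) (t - 1)) 0 := by
      intro p hp
      obtain ⟨q, rfl⟩ : ∃ q, p = q + 1 := ⟨p - 1, by omega⟩
      rw [gmap, getD_zero_cons, getD_zero_append_right _ _ _ (by rw [List.length_replicate]; omega)]
      simp only [List.length_replicate]
      congr 1
    refine ⟨⟨?_, ?_⟩, hLen⟩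
    · intro x hx
      rcases List.mem_cons.mp hx with rfl | hx2
      · exact hℓ
      rcases List.mem_append.mp hx2 with hx3 | hx3
      · have := List.eq_of_mem_replicate hx3; omega
      · exact hdig' x hx3
    · intro i j hij hj hjlen
      rw [hLen] at hjlen
      rcases Nat.eq_zero_or_pos i with rfl | hipos
      · rw [g0] at hj
        exact gmid j (by omega) (by omega)
      rcases Nat.lt_or_ge i (1 + min (mu lam ℓ - 1) (t - 1)) with hi | hi
      · rw [gmid i hipos (by omega), mu_zero h1] at hj
        omega
      · rw [ghigh i hi] at hj
        have hres := hcon' (i - 1 - min (mu lam ℓ - 1) (t - 1))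
          (j - 1 - min (mu lam ℓ - 1) (t - 1)) (by omega) (by omega) (by omega)
        rw [ghigh j (by omega)]
        exact hres

lemma ncard_finset_biUnion {ι α : Type*} (s : Finset ι) (f : ι → Set α)
    (hfin : ∀ i ∈ s, (f i).Finite)
    (hdisj : ∀ i ∈ s, ∀ j ∈ s, i ≠ j → Disjoint (f i) (f j)) :
    (⋃ i ∈ s, f i).ncard = ∑ i ∈ s, (f i).ncard := by
  classical
  induction s using Finset.induction with
  | empty => simp
  | insert _ _ hx ih =>
    rename_i a s
    rw [Finset.sum_insert hx]
    have hU : (⋃ i ∈ insert a s, f i) = f a ∪ ⋃ i ∈ s, f i := by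
      simp [Set.iUnion_or, Set.iUnion_union_distrib]
    rw [hU]
    have hfin' : (⋃ i ∈ s, f i).Finite := by
      apply Set.Finite.biUnion s.finite_toSet
      exact fun i hi => hfin i (Finset.mem_insert_of_mem hi)
    have hd : Disjoint (f a) (⋃ i ∈ s, f i) := by
      rw [Set.disjoint_iUnion_right]
      intro i
      rw [Set.disjoint_iUnion_right]
      intro hi
      exact hdisj a (Finset.mem_insert_self a s) i (Finset.mem_insert_of_mem hi)
        (fun h => hx (h ▸ hi))
    rw [Set.ncard_union_eq hd (hfin a (Finset.mem_insert_self a s)) hfin',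
      ih (fun i hi => hfin i (Finset.mem_insert_of_mem hi))
        (fun i hi j hj hij => hdisj i (Finset.mem_insert_of_mem hi) j
          (Finset.mem_insert_of_mem hj) hij)]

lemma gmap_inj (lam : ℕ → ℕ) (t ℓ : ℕ) : Function.Injective (gmap lam t ℓ) := by
  intro l₁ l₂ h
  simpa [gmap] using h

lemma Tset_card_rec {lam : ℕ → ℕ} {k : ℕ} (h1 : 1 ≤ lam 1) (hΛ : 2 ≤ Lam lam k)
    {t : ℕ} (ht : 1 ≤ t) :
    (Tset lam k t).ncard =
      ∑ ℓ ∈ Finset.range (Lam lam k), (Tset lam k (t - mu lam ℓ)).ncard := by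
  rw [Tset_decomp h1 hΛ ht,
    ncard_finset_biUnion _ _
      (fun ℓ _ => (Tset_finite lam k _).image _)
      ?_]
  · exact Finset.sum_congr rfl fun ℓ _ =>
      Set.ncard_image_of_injective _ (gmap_inj lam t ℓ)
  · intro i _ j _ hij
    rw [Set.disjoint_left]
    rintro x ⟨l₁, -, rfl⟩ ⟨l₂, -, hx⟩
    simp only [gmap, List.cons.injEq] at hx
    exact hij hx.1.symm

lemma sum_over_mu {lam : ℕ → ℕ} {k : ℕ} (hk : 1 ≤ k) (hzero : ∀ i, k < i → lam i = 0)
    (f : ℕ → ℕ) :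
    ∑ ℓ ∈ Finset.range (Lam lam k), f (mu lam ℓ) =
      ∑ j ∈ Finset.Icc 1 k, lam j * f j := by
  classical
  have hsplit : Finset.range (Lam lam k) =
      (Finset.Icc 1 k).biUnion (fun j => Finset.Ico (Lam lam (j - 1)) (Lam lam j)) := by
    ext ℓ
    simp only [Finset.mem_range, Finset.mem_biUnion, Finset.mem_Icc, Finset.mem_Ico]
    constructor
    · intro hℓ
      have hp := mu_pos hℓ
      exact ⟨mu lam ℓ, ⟨hp, mu_le hℓ⟩, mu_lb (by omega), mu_spec hℓ⟩
    · rintro ⟨j, ⟨-, hjk⟩, -, h2⟩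
      exact lt_of_lt_of_le h2 (Lam_mono lam hjk)
  have hdisj : (↑(Finset.Icc 1 k) : Set ℕ).PairwiseDisjoint
      (fun j => Finset.Ico (Lam lam (j - 1)) (Lam lam j)) := by
    intro i hi j hj hij
    simp only [Finset.coe_Icc, Set.mem_Icc] at hi hj
    rcases Nat.lt_or_ge i j with h | h
    · apply Finset.disjoint_left.mpr
      intro x hx hx'
      rw [Finset.mem_Ico] at hx hx'
      have : Lam lam i ≤ Lam lam (j - 1) := Lam_mono lam (by omega)
      omega
    · have h' : j < i := by omega
      apply Finset.disjoint_left.mpr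
      intro x hx hx'
      rw [Finset.mem_Ico] at hx hx'
      have : Lam lam j ≤ Lam lam (i - 1) := Lam_mono lam (by omega)
      omega
  rw [hsplit, Finset.sum_biUnion hdisj]
  apply Finset.sum_congr rfl
  intro j hj
  rw [Finset.mem_Icc] at hj
  have hcongr : ∀ ℓ ∈ Finset.Ico (Lam lam (j - 1)) (Lam lam j), f (mu lam ℓ) = f j := by
    intro ℓ hℓ
    rw [Finset.mem_Ico] at hℓ
    rw [mu_eq hj.1 hℓ.1 hℓ.2]
  rw [Finset.sum_congr rfl hcongr, Finset.sum_const, Nat.card_Ico, smul_eq_mul]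
  congr 1
  obtain ⟨j', rfl⟩ : ∃ j', j = j' + 1 := ⟨j - 1, by omega⟩
  rw [Lam_succ]
  simp

lemma Tset_zero (lam : ℕ → ℕ) (k : ℕ) : Tset lam k 0 = {([] : List ℕ)} := by
  ext l
  simp only [Tset, Set.mem_setOf_eq, Set.mem_singleton_iff, List.length_eq_zero_iff]
  constructor
  · exact fun h => h.2
  · rintro rfl
    exact ⟨⟨by simp, fun i j _ _ h => by simp at h⟩, rfl⟩

lemma Tset_count {lam : ℕ → ℕ} {k : ℕ} (hk : 1 ≤ k)
    (h1 : 1 ≤ lam 1) (hzero : ∀ i, k < i → lam i = 0) (hΛ : 2 ≤ Lam lam k)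
    (a : ℤ → ℤ)
    (ha0 : ∀ i : ℤ, i ≤ 0 → a i = 1)
    (harec : ∀ n : ℤ, 1 ≤ n → a n = ∑ i ∈ Finset.Icc 1 k, (lam i : ℤ) * a (n - i)) :
    ∀ t : ℕ, ((Tset lam k t).ncard : ℤ) = a t := by
  intro t
  induction t using Nat.strong_induction_on with
  | _ t ih =>
    rcases Nat.eq_zero_or_pos t with rfl | ht
    · rw [Tset_zero, Set.ncard_singleton]
      simp only [Nat.cast_zero, Nat.cast_one, ha0 0 le_rfl]
    · rw [Tset_card_rec h1 hΛ ht, sum_over_mu hk hzero (fun j => (Tset lam k (t - j)).ncard),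
        harec t (by exact_mod_cast ht)]
      push_cast
      apply Finset.sum_congr rfl
      intro j hj
      rw [Finset.mem_Icc] at hj
      congr 1
      rcases le_or_gt j t with h | h
      · rw [ih (t - j) (by omega)]
        congr 1
        omega
      · rw [ih (t - j) (by omega)]
        have h0 : t - j = 0 := by omega
        rw [h0, ha0 ((t : ℤ) - j) (by push_cast; omega)]
        simp only [Nat.cast_zero, ha0 0 le_rfl]

lemma getD_append_zeros (l : List ℕ) (m j : ℕ) :
    (l ++ List.replicate m 0).getD j 0 = l.getD j 0 := by
  rcases Nat.lt_or_ge j l.length with h | h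
  · exact getD_zero_append_left _ _ _ h
  · rw [getD_zero_append_right _ _ _ h, getD_zero_replicate, List.getD_eq_default _ _ h]

lemma Pstr_append_zeros {lam : ℕ → ℕ} {k : ℕ} (hΛ : 2 ≤ Lam lam k) {l : List ℕ}
    (hP : Pstr lam k l) (m : ℕ) : Pstr lam k (l ++ List.replicate m 0) := by
  refine ⟨fun x hx => ?_, fun i j hij hj hjlen => ?_⟩
  · rcases List.mem_append.mp hx with h | h
    · exact hP.1 x h
    · have := List.eq_of_mem_replicate h; omega
  · rw [getD_append_zeros] at hj ⊢
    rcases Nat.lt_or_ge j l.length with h | h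
    · exact hP.2 i j hij hj h
    · exact List.getD_eq_default _ _ h

lemma Pstr_take {lam : ℕ → ℕ} {k : ℕ} {l : List ℕ} (hP : Pstr lam k l) (n : ℕ) :
    Pstr lam k (l.take n) := by
  refine ⟨fun x hx => hP.1 x (List.take_subset n l hx), fun i j hij hj hjlen => ?_⟩
  rw [List.length_take] at hjlen
  rw [getD_zero_take _ _ _ (by omega)] at hj
  rw [getD_zero_take _ _ _ (by omega)]
  exact hP.2 i j hij hj (by omega)

lemma rdrop_append_zeros (l : List ℕ) (m : ℕ) (h : l.getLast? ≠ some 0) :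
    (l ++ List.replicate m 0).rdropWhile (· == 0) = l := by
  induction m with
  | zero =>
    simp only [List.replicate_zero, List.append_nil]
    rw [List.rdropWhile_eq_self_iff]
    intro hl
    rw [List.getLast?_eq_getLast_of_ne_nil hl] at h
    simp only [ne_eq, Option.some.injEq] at h
    simp [h]
  | succ n ihm =>
    rw [List.replicate_succ', ← List.append_assoc,
      List.rdropWhile_concat_pos _ _ 0 (by simp), ihm]

lemma rdrop_rtake {α : Type*} (p : α → Bool) (l : List α) :
    l.rdropWhile p ++ l.rtakeWhile p = l := by
  rw [List.rdropWhile, List.rtakeWhile, ← List.reverse_append,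
    List.takeWhile_append_dropWhile, List.reverse_reverse]

/-- the number of `a`-valid sequences with at most `t` digits
is `a_t - 1`. -/
theorem stmt1 (k : ℕ) (lam : ℕ → ℕ) (hk : 1 ≤ k)
    (h1 : 1 ≤ lam 1) (hkpos : 1 ≤ lam k) (hzero : ∀ i, k < i → lam i = 0)
    (hΛ : 2 ≤ Lam lam k)
    (a : ℤ → ℤ)
    (ha0 : ∀ i : ℤ, i ≤ 0 → a i = 1)
    (harec : ∀ n : ℤ, 1 ≤ n → a n = ∑ i ∈ Finset.Icc 1 k, (lam i : ℤ) * a (n - i)) :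
    ∀ t : ℕ, 1 ≤ t →
      (Set.ncard {l : List ℕ | AValid lam k l ∧ l.length ≤ t} : ℤ) = a t - 1 := by
  intro t ht
  classical
  set S := {l : List ℕ | AValid lam k l ∧ l.length ≤ t} with hS
  set F : List ℕ → List ℕ := fun l => l ++ List.replicate (t - l.length) 0 with hF
  have hrep : List.replicate t (0:ℕ) ∈ Tset lam k t := by
    refine ⟨⟨fun x hx => ?_, fun i j _ _ _ => getD_zero_replicate t j⟩, by simp⟩
    have := List.eq_of_mem_replicate hx; omega
  have himg : F '' S = Tset lam k t \ {List.replicate t 0} := by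
    ext l
    constructor
    · rintro ⟨l', ⟨⟨hne, hdig, hlast, hcon⟩, hlen⟩, rfl⟩
      refine ⟨⟨Pstr_append_zeros hΛ ⟨hdig, hcon⟩ _, by simp [hF]; omega⟩, ?_⟩
      simp only [Set.mem_singleton_iff]
      intro habs
      apply hlast
      rw [List.getLast?_eq_getLast_of_ne_nil hne]
      have hmem : l'.getLast hne ∈ F l' := List.mem_append_left _ (List.getLast_mem hne)
      rw [habs] at hmem
      rw [List.eq_of_mem_replicate hmem]
    · rintro ⟨⟨hP, hlen⟩, hne0⟩
      simp only [Set.mem_singleton_iff] at hne0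
      set l' := l.rdropWhile (· == 0) with hl'
      have hsplit : l' ++ l.rtakeWhile (· == 0) = l := rdrop_rtake _ l
      have hz : l.rtakeWhile (· == 0) =
          List.replicate (l.rtakeWhile (· == 0)).length 0 := by
        rw [List.eq_replicate_iff]
        exact ⟨rfl, fun b hb => by simpa using List.mem_rtakeWhile_imp hb⟩
      have hlen2 : l'.length + (l.rtakeWhile (· == 0)).length = t := by
        have hc := congrArg List.length hsplit
        rw [List.length_append] at hc
        omega
      have hne : l' ≠ [] := by
        intro habs
        rw [habs, List.nil_append] at hsplit
        rw [← hsplit, hz] at hne0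
        apply hne0
        rw [← hsplit] at hlen
        rw [hz] at hlen
        simp only [List.length_replicate] at hlen
        rw [hlen]
      have hlast : l'.getLast? ≠ some 0 := by
        have hnot := List.rdropWhile_last_not (· == 0 : ℕ → Bool) l (by rw [← hl']; exact hne)
        rw [List.getLast?_eq_getLast_of_ne_nil hne]
        intro habs
        simp only [Option.some.injEq] at habs
        apply hnot
        simp only [← hl']
        rw [habs]
        decide
      have hpre : l' = l.take l'.length := by
        conv_rhs => rw [← hsplit]
        rw [List.take_left]
      have hP' : Pstr lam k l' := by rw [hpre]; exact Pstr_take hP _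
      refine ⟨l', ⟨⟨hne, hP'.1, hlast, hP'.2⟩, by omega⟩, ?_⟩
      show l' ++ List.replicate (t - l'.length) 0 = l
      rw [show t - l'.length = (l.rtakeWhile (· == 0)).length by omega, ← hz, hsplit]
  have hinj : Set.InjOn F S := by
    rintro l₁ ⟨⟨hne₁, -, hlast₁, -⟩, hlen₁⟩ l₂ ⟨⟨hne₂, -, hlast₂, -⟩, hlen₂⟩ heq
    have e₁ : (F l₁).rdropWhile (· == 0) = l₁ := rdrop_append_zeros _ _ hlast₁
    have e₂ : (F l₂).rdropWhile (· == 0) = l₂ := rdrop_append_zeros _ _ hlast₂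
    rw [← e₁, ← e₂, heq]
  have hcount := Tset_count hk h1 hzero hΛ a ha0 harec t
  have hfin := Tset_finite lam k t
  have hpos : 0 < (Tset lam k t).ncard := (Set.ncard_pos hfin).mpr ⟨_, hrep⟩
  have hdiff : (Tset lam k t \ {List.replicate t 0}).ncard = (Tset lam k t).ncard - 1 :=
    Set.ncard_diff_singleton_of_mem hrep
  have : (S.ncard : ℤ) = ((Tset lam k t \ {List.replicate t 0}).ncard : ℤ) := by
    rw [← Set.ncard_image_of_injOn hinj, himg]
  rw [this, hdiff]
  push_cast [Nat.cast_sub hpos]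
  omega
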